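/- Let T be a finite tree on at least 2 vertices and let s be a real number. Then the deformed Laplacian M_T(s) is positive definite if and only if |s| < 1. -/

import Mathlib

open scoped Classical
open Matrix Polynomial

/-- The deformed Laplacian matrix `M_G(s) = I - s·A(G) + s²·(D(G) - I)` of a finite
simple graph `G`. -/
noncomputable def deformedLap {V : Type*} [Fintype V] (G : SimpleGraph V) (s : ℝ) :
    Matrix V V ℝ :=
  1 - s • G.adjMatrix ℝ + s ^ 2 • (Matrix.diagonal (fun v => (G.degree v : ℝ)) - 1)

/-- The largest (real) eigenvalue of a matrix: the supremum of its real spectrum.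
For a real symmetric matrix this is the maximal eigenvalue (the paper's `ρ`). -/
noncomputable def lamMax {n : Type*} [Fintype n] (M : Matrix n n ℝ) : ℝ :=
  sSup (spectrum ℝ M)

/-- For a tree `T` on at least two vertices, `M_T(s)` is positive definite iff `|s| < 1`. -/
theorem stmt_7 {V : Type*} [Fintype V] (T : SimpleGraph V) (hT : T.IsTree)
    (hn : 2 ≤ Fintype.card V) (s : ℝ) :
    (deformedLap T s).PosDef ↔ |s| < 1 := by
  classical
  have hne : Nonempty V := Fintype.card_pos_iff.mp (by omega)
  obtain ⟨r⟩ := hne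
  choose f hf hf' using (hT.existsUnique_path · r)
  set pa : V → V := fun v => (f v).getVert 1 with hpa
  set d : V → ℕ := fun v => (f v).length with hd
  have hfr : f r = .nil := (hf' r .nil SimpleGraph.Walk.IsPath.nil).symm
  have hdr : d r = 0 := by simp [hd, hfr]
  -- basic facts about the parent function
  have L1 : ∀ v, v ≠ r → T.Adj v (pa v) ∧ d v = d (pa v) + 1 := by
    intro v hv
    obtain ⟨w, h, q, hq⟩ := SimpleGraph.Walk.exists_eq_cons_of_ne hv (f v)
    have hqp : q.IsPath := by
      have := hf v; rw [hq] at this; exact this.of_cons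
    have hqf : q = f w := hf' w q hqp
    have hw : pa v = w := by simp [hpa, hq]
    rw [hw]
    subst hqf
    exact ⟨h, by simp [hd, hq]⟩
  -- dichotomy for edges
  have L2 : ∀ u v, T.Adj u v → (v ≠ r ∧ pa v = u) ∨ (u ≠ r ∧ pa u = v) := by
    intro u v h
    by_cases hvr : v = r
    · subst hvr
      right
      refine ⟨h.ne, ?_⟩
      have h1 : SimpleGraph.Walk.cons h .nil = f u :=
        hf' u _ (SimpleGraph.Walk.IsPath.nil.cons (by simpa using h.ne))
      show (f u).getVert 1 = v
      rw [← h1]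
      simp
    · by_cases hu : u ∈ (f v).support
      · left
        refine ⟨hvr, ?_⟩
        have htu : (f v).takeUntil u hu = SimpleGraph.Walk.cons h.symm .nil :=
          (hT.existsUnique_path v u).unique ((hf v).takeUntil hu)
            (SimpleGraph.Walk.IsPath.nil.cons (by simpa using h.symm.ne))
        have hts := SimpleGraph.Walk.take_spec (f v) hu
        rw [htu] at hts
        have hts' : SimpleGraph.Walk.cons h.symm ((f v).dropUntil u hu) = f v := by
          simpa using hts
        show (f v).getVert 1 = u
        rw [← hts']
        simp
      · right
        have hur : u ≠ r := by
          intro h'; subst h'; exact hu ((f v).end_mem_support)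
        refine ⟨hur, ?_⟩
        have h1 : SimpleGraph.Walk.cons h (f v) = f u := by
          apply hf' u _
          rw [SimpleGraph.Walk.cons_isPath_iff]
          exact ⟨hf v, hu⟩
        show (f u).getVert 1 = v
        rw [← h1]
        simp
  have hadj : ∀ v, v ≠ r → T.Adj v (pa v) := fun v hv => (L1 v hv).1
  have hdep : ∀ v, v ≠ r → d v = d (pa v) + 1 := fun v hv => (L1 v hv).2
  -- the pairing lemma: sum over ordered adjacent pairs
  have pair : ∀ g : V → V → ℝ,
      (∑ u : V, ∑ v : V, if T.Adj u v then g u v else 0)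
        = ∑ v ∈ Finset.univ.erase r, (g v (pa v) + g (pa v) v) := by
    intro g
    have hLHS : (∑ u : V, ∑ v : V, if T.Adj u v then g u v else 0)
        = ∑ e ∈ (Finset.univ ×ˢ Finset.univ).filter (fun e : V × V => T.Adj e.1 e.2),
            g e.1 e.2 := by
      rw [Finset.sum_filter, Finset.sum_product]
    rw [hLHS]
    set S := (Finset.univ ×ˢ Finset.univ).filter (fun e : V × V => T.Adj e.1 e.2) with hS
    have hsplit := Finset.sum_filter_add_sum_filter_not S
      (fun e : V × V => e.1 ≠ r ∧ pa e.1 = e.2) (fun e : V × V => g e.1 e.2)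
    rw [← hsplit, Finset.sum_add_distrib]
    congr 1
    · refine Finset.sum_bij' (fun e _ => e.1) (fun v _ => (v, pa v)) ?_ ?_ ?_ ?_ ?_
      · intro e he
        rw [Finset.mem_filter] at he
        exact Finset.mem_erase.mpr ⟨he.2.1, Finset.mem_univ _⟩
      · intro v hv
        rw [Finset.mem_erase] at hv
        rw [Finset.mem_filter, hS, Finset.mem_filter]
        exact ⟨⟨Finset.mem_product.mpr ⟨Finset.mem_univ _, Finset.mem_univ _⟩,
          hadj v hv.1⟩, hv.1, rfl⟩
      · intro e he
        rw [Finset.mem_filter] at he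
        exact Prod.ext rfl he.2.2
      · intro v hv; rfl
      · intro e he
        rw [Finset.mem_filter] at he
        rw [he.2.2]
    · refine Finset.sum_bij' (fun e _ => e.2) (fun v _ => (pa v, v)) ?_ ?_ ?_ ?_ ?_
      · intro e he
        rw [Finset.mem_filter, hS, Finset.mem_filter] at he
        obtain ⟨⟨_, hadj'⟩, hnp⟩ := he
        rcases L2 e.1 e.2 hadj' with h' | h'
        · exact Finset.mem_erase.mpr ⟨h'.1, Finset.mem_univ _⟩
        · exact absurd h' hnp
      · intro v hv
        rw [Finset.mem_erase] at hv
        rw [Finset.mem_filter, hS, Finset.mem_filter]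
        refine ⟨⟨Finset.mem_product.mpr ⟨Finset.mem_univ _, Finset.mem_univ _⟩,
          (hadj v hv.1).symm⟩, ?_⟩
        dsimp only
        rintro ⟨hp1, hp2⟩
        have h1 := hdep v hv.1
        have h2 := hdep (pa v) hp1
        rw [hp2] at h2
        omega
      · intro e he
        rw [Finset.mem_filter, hS, Finset.mem_filter] at he
        obtain ⟨⟨_, hadj'⟩, hnp⟩ := he
        rcases L2 e.1 e.2 hadj' with h' | h'
        · exact Prod.ext h'.2 rfl
        · exact absurd h' hnp
      · intro v hv; rfl
      · intro e he
        rw [Finset.mem_filter, hS, Finset.mem_filter] at he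
        obtain ⟨⟨_, hadj'⟩, hnp⟩ := he
        rcases L2 e.1 e.2 hadj' with h' | h'
        · rw [← h'.2]
        · exact absurd h' hnp
  -- the quadratic form identity
  have hQ : ∀ x : V → ℝ, x ⬝ᵥ (deformedLap T s *ᵥ x)
      = (1 - s ^ 2) * (x r) ^ 2 + ∑ v ∈ Finset.univ.erase r, (x v - s * x (pa v)) ^ 2 := by
    intro x
    set A1 := ∑ v ∈ Finset.univ.erase r, (x v) ^ 2 with hA1
    set A2 := ∑ v ∈ Finset.univ.erase r, x v * x (pa v) with hA2
    set A3 := ∑ v ∈ Finset.univ.erase r, (x (pa v)) ^ 2 with hA3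
    have h1 : ∑ v : V, (x v) ^ 2 = (x r) ^ 2 + A1 :=
      (Finset.add_sum_erase _ _ (Finset.mem_univ r)).symm
    have h2 : (∑ u : V, x u * ∑ w ∈ T.neighborFinset u, x w) = 2 * A2 := by
      have e1 : (∑ u : V, x u * ∑ w ∈ T.neighborFinset u, x w)
          = ∑ u : V, ∑ v : V, if T.Adj u v then x u * x v else 0 := by
        apply Finset.sum_congr rfl
        intro u _
        rw [Finset.mul_sum, SimpleGraph.neighborFinset_eq_filter, Finset.sum_filter]
      rw [e1, pair (fun u v => x u * x v)]
      rw [hA2, Finset.mul_sum]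
      apply Finset.sum_congr rfl
      intro v _; ring
    have h3 : (∑ u : V, (T.degree u : ℝ) * (x u) ^ 2) = A1 + A3 := by
      have e1 : (∑ u : V, (T.degree u : ℝ) * (x u) ^ 2)
          = ∑ u : V, ∑ v : V, if T.Adj u v then (x u) ^ 2 else 0 := by
        apply Finset.sum_congr rfl
        intro u _
        rw [← Finset.sum_filter, Finset.sum_const, nsmul_eq_mul]
        have hdeg : T.degree u = (Finset.univ.filter (fun w => T.Adj u w)).card := by
          rw [SimpleGraph.degree, SimpleGraph.neighborFinset_eq_filter]
        rw [hdeg]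
      rw [e1, pair (fun u v => (x u) ^ 2), hA1, hA3, ← Finset.sum_add_distrib]
    have h4 : ∑ v ∈ Finset.univ.erase r, (x v - s * x (pa v)) ^ 2
        = A1 - 2 * s * A2 + s ^ 2 * A3 := by
      rw [hA1, hA2, hA3, Finset.mul_sum, Finset.mul_sum, ← Finset.sum_sub_distrib,
        ← Finset.sum_add_distrib]
      apply Finset.sum_congr rfl
      intro v _; ring
    have hx : ∀ u, (deformedLap T s *ᵥ x) u
        = x u - s * (∑ w ∈ T.neighborFinset u, x w)
            + s ^ 2 * ((T.degree u : ℝ) * x u - x u) := by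
      intro u
      simp [deformedLap, Matrix.add_mulVec, Matrix.sub_mulVec, Matrix.smul_mulVec,
        Matrix.one_mulVec, Matrix.mulVec_diagonal, SimpleGraph.adjMatrix_mulVec_apply,
        smul_eq_mul]
    have e0 : x ⬝ᵥ (deformedLap T s *ᵥ x)
        = ∑ u : V, ((x u) ^ 2 - s * (x u * ∑ w ∈ T.neighborFinset u, x w)
            + (s ^ 2 * ((T.degree u : ℝ) * (x u) ^ 2) - s ^ 2 * (x u) ^ 2)) := by
      rw [dotProduct]
      apply Finset.sum_congr rfl
      intro u _
      rw [hx u]; ring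
    rw [e0, Finset.sum_add_distrib, Finset.sum_sub_distrib, Finset.sum_sub_distrib]
    simp only [← Finset.mul_sum]
    rw [h1, h2, h3, h4]
    ring
  -- hermitian
  have hherm : (deformedLap T s).IsHermitian := by
    have : (deformedLap T s)ᵀ = deformedLap T s := by
      simp [deformedLap, Matrix.transpose_add, Matrix.transpose_sub, Matrix.transpose_smul,
        Matrix.transpose_one, Matrix.diagonal_transpose, SimpleGraph.transpose_adjMatrix]
    rw [Matrix.IsHermitian, Matrix.conjTranspose_eq_transpose_of_trivial]
    simpa using this
  constructor
  · -- PD → |s| < 1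
    intro hPD
    set y : V → ℝ := fun v => s ^ (d v) with hy
    have hy0 : y ≠ 0 := by
      intro h0
      have hyr : y r = 0 := by rw [h0]; rfl
      rw [hy] at hyr
      simp [hdr] at hyr
    have hpos := hPD.dotProduct_mulVec_pos hy0
    rw [star_trivial, hQ y] at hpos
    have hzero : ∑ v ∈ Finset.univ.erase r, (y v - s * y (pa v)) ^ 2 = 0 := by
      apply Finset.sum_eq_zero
      intro v hv
      have hv' : v ≠ r := (Finset.mem_erase.mp hv).1
      have hdv := hdep v hv'
      have : y v = s * y (pa v) := by
        rw [hy]; simp only []; rw [hdv, pow_succ]; ring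
      rw [this]; ring
    rw [hzero] at hpos
    have hyr : y r = 1 := by rw [hy]; simp [hdr]
    rw [hyr] at hpos
    rw [← sq_lt_one_iff_abs_lt_one]
    nlinarith
  · -- |s| < 1 → PD
    intro hs
    have hs2 : s ^ 2 < 1 := by rwa [sq_lt_one_iff_abs_lt_one]
    refine Matrix.PosDef.of_dotProduct_mulVec_pos hherm ?_
    intro x hx
    rw [star_trivial, hQ x]
    have hA : 0 ≤ (1 - s ^ 2) * (x r) ^ 2 := by nlinarith [sq_nonneg (x r)]
    have hS : 0 ≤ ∑ v ∈ Finset.univ.erase r, (x v - s * x (pa v)) ^ 2 :=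
      Finset.sum_nonneg fun v _ => sq_nonneg _
    rcases lt_or_eq_of_le (by linarith :
        (0:ℝ) ≤ (1 - s ^ 2) * (x r) ^ 2
          + ∑ v ∈ Finset.univ.erase r, (x v - s * x (pa v)) ^ 2) with hlt | heq
    · exact hlt
    · exfalso
      have hAz : (1 - s ^ 2) * (x r) ^ 2 = 0 := by linarith
      have hSz : ∑ v ∈ Finset.univ.erase r, (x v - s * x (pa v)) ^ 2 = 0 := by linarith
      have hterm := (Finset.sum_eq_zero_iff_of_nonneg
        (fun v (_ : v ∈ Finset.univ.erase r) => sq_nonneg (x v - s * x (pa v)))).mp hSz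
      have hxr : x r = 0 := by
        have h1s : (1 : ℝ) - s ^ 2 ≠ 0 := by nlinarith
        have := mul_eq_zero.mp hAz
        rcases this with h | h
        · exact absurd h h1s
        · exact sq_eq_zero_iff.mp h
      have hrec : ∀ v, v ≠ r → x v = s * x (pa v) := by
        intro v hv
        have := hterm v (Finset.mem_erase.mpr ⟨hv, Finset.mem_univ v⟩)
        have := sq_eq_zero_iff.mp this
        linarith
      have hall : ∀ n : ℕ, ∀ v, d v ≤ n → x v = 0 := by
        intro n
        induction n with
        | zero =>
          intro v hv
          have hv0 : (f v).length = 0 := Nat.le_zero.mp hv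
          have : v = r := SimpleGraph.Walk.eq_of_length_eq_zero hv0
          rw [this]; exact hxr
        | succ n ih =>
          intro v hv
          by_cases hvr : v = r
          · rw [hvr]; exact hxr
          · rw [hrec v hvr, ih (pa v) (by have := hdep v hvr; omega), mul_zero]
      exact hx (funext fun v => hall (d v) v le_rfl)
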